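/- As an identity of formal power series in two variables u, v: the sum over all partitions λ of u^{o(λ)} v^{e(λ)} equals ∏_{j=1}^{∞} (1 − (uv)^j)^{−1} (1 − u(uv)^{j−1})^{−1}. -/

import Mathlib

/-- A partition: a weakly decreasing sequence of nonnegative integers with
finitely many nonzero terms. -/
structure CPartition where
  parts : ℕ → ℕ
  antitone : Antitone parts
  finite_support : Set.Finite {i : ℕ | parts i ≠ 0}

/-- The conjugate partition: `λ'_j = #{i : λ_i ≥ j}` (columns indexed from 1). -/
noncomputable def CPartition.conj (lam : CPartition) (j : ℕ) : ℕ :=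
  Nat.card {i : ℕ | j ≤ lam.parts i}

/-- `o(λ) = Σ_{j odd} λ'_j`, the number of boxes of `λ` in odd-indexed columns. -/
noncomputable def CPartition.oddCols (lam : CPartition) : ℕ :=
  ∑' j : ℕ, if Odd j then lam.conj j else 0

/-- `e(λ) = Σ_{j even, j ≥ 2} λ'_j`, the number of boxes of `λ` in even-indexed
columns. -/
noncomputable def CPartition.evenCols (lam : CPartition) : ℕ :=
  ∑' j : ℕ, if Even j ∧ j ≠ 0 then lam.conj j else 0

open Finset

open scoped Classical in
noncomputable def geom (d : Fin 2 →₀ ℕ) : MvPowerSeries (Fin 2) ℚ :=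
  fun e => if ∃ k : ℕ, e = k • d then 1 else 0

open scoped Classical in
lemma coeff_geom (d e : Fin 2 →₀ ℕ) :
    MvPowerSeries.coeff e (geom d) = if ∃ k : ℕ, e = k • d then 1 else 0 := by
  rw [MvPowerSeries.coeff_apply]; rfl

noncomputable def dW (t : ℕ) : Fin 2 →₀ ℕ :=
  Finsupp.single 0 ((t + 1) / 2) + Finsupp.single 1 (t / 2)

lemma dW_apply0 (t : ℕ) : dW t 0 = (t + 1) / 2 := by
  simp [dW, Finsupp.single_apply]

lemma dW_apply1 (t : ℕ) : dW t 1 = t / 2 := by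
  simp [dW, Finsupp.single_apply]

lemma dW_ne_zero {t : ℕ} (ht : 1 ≤ t) : dW t ≠ 0 := by
  intro h
  have := congrArg (fun f : Fin 2 →₀ ℕ => f 0) h
  simp [dW_apply0] at this
  omega

lemma smul_finsupp_apply (k : ℕ) (d : Fin 2 →₀ ℕ) (a : Fin 2) : (k • d) a = k * d a := by
  simp

open scoped Classical in
lemma one_sub_monomial_mul_geom (d : Fin 2 →₀ ℕ) (hd : d ≠ 0) :
    (1 - MvPowerSeries.monomial d 1) * geom d = 1 := by
  ext e
  rw [sub_mul, one_mul, map_sub, MvPowerSeries.coeff_monomial_mul, coeff_geom,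
    MvPowerSeries.coeff_one]
  by_cases he : e = 0
  · subst he
    rw [if_pos rfl, if_pos ⟨0, by simp⟩, if_neg]
    · ring
    · intro hle
      exact hd (le_antisymm (by simpa using hle) zero_le)
  · rw [if_neg he]
    by_cases hm : ∃ k : ℕ, e = k • d
    · obtain ⟨k, rfl⟩ := hm
      have hk : k ≠ 0 := by rintro rfl; simp at he
      have hle : d ≤ k • d := by
        intro a
        have : d a ≤ k * d a := Nat.le_mul_of_pos_left _ (Nat.pos_of_ne_zero hk)
        simpa using this
      have hwit : ∃ k' : ℕ, (k • d - d : Fin 2 →₀ ℕ) = k' • d := by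
        refine ⟨k - 1, ?_⟩
        ext a
        have : d a ≤ k * d a := Nat.le_mul_of_pos_left _ (Nat.pos_of_ne_zero hk)
        simp [Finsupp.tsub_apply]
        cases k with
        | zero => simp at hk
        | succ k' => simp [Nat.succ_mul]
      rw [if_pos ⟨k, rfl⟩, if_pos hle, coeff_geom, if_pos hwit]
      ring
    · rw [if_neg hm]
      by_cases hle : d ≤ e
      · rw [if_pos hle, coeff_geom, if_neg, mul_zero, sub_zero]
        rintro ⟨k, hk⟩
        apply hm
        refine ⟨k + 1, ?_⟩
        ext a
        have h1 : d a ≤ e a := hle a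
        have h2 : e a - d a = k * d a := by
          have := congrArg (fun f : Fin 2 →₀ ℕ => f a) hk
          simpa [Finsupp.tsub_apply] using this
        simp [Nat.succ_mul]
        omega
      · rw [if_neg hle, sub_zero]

open scoped Classical in
lemma inv_one_sub_monomial (d : Fin 2 →₀ ℕ) (hd : d ≠ 0) :
    ((1 - MvPowerSeries.monomial d 1)⁻¹ : MvPowerSeries (Fin 2) ℚ) = geom d := by
  rw [MvPowerSeries.inv_eq_iff_mul_eq_one]
  · rw [mul_comm]; exact one_sub_monomial_mul_geom d hd
  · rw [map_sub, MvPowerSeries.constantCoeff_one]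
    have : MvPowerSeries.constantCoeff (MvPowerSeries.monomial d (1 : ℚ)) = 0 := by
      rw [← MvPowerSeries.coeff_zero_eq_constantCoeff_apply, MvPowerSeries.coeff_monomial,
        if_neg (by exact fun h => hd h.symm)]
    rw [this]; norm_num

lemma factor_even (j : ℕ) :
    (1 - (MvPowerSeries.X 0 * MvPowerSeries.X 1) ^ j : MvPowerSeries (Fin 2) ℚ)
      = 1 - MvPowerSeries.monomial (dW (2 * j)) 1 := by
  congr 1
  rw [mul_pow, MvPowerSeries.X_pow_eq, MvPowerSeries.X_pow_eq,
    MvPowerSeries.monomial_mul_monomial, one_mul]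
  congr 1
  have h1 : (2 * j + 1) / 2 = j := by omega
  have h2 : 2 * j / 2 = j := by omega
  rw [dW, h1, h2]

lemma factor_odd (j : ℕ) (hj : 1 ≤ j) :
    (1 - MvPowerSeries.X 0 * (MvPowerSeries.X 0 * MvPowerSeries.X 1) ^ (j - 1) :
        MvPowerSeries (Fin 2) ℚ)
      = 1 - MvPowerSeries.monomial (dW (2 * j - 1)) 1 := by
  congr 1
  rw [mul_pow, MvPowerSeries.X_pow_eq, MvPowerSeries.X_pow_eq, ← mul_assoc,
    MvPowerSeries.X, MvPowerSeries.monomial_mul_monomial, MvPowerSeries.monomial_mul_monomial,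
    one_mul, one_mul]
  congr 1
  have h1 : (2 * j - 1 + 1) / 2 = j := by omega
  have h2 : (2 * j - 1) / 2 = j - 1 := by omega
  have h3 : 1 + (j - 1) = j := by omega
  rw [dW, h1, h2, ← Finsupp.single_add, h3]

lemma prod_pair {M : Type*} [CommMonoid M] (f : ℕ → M) (N : ℕ) :
    ∏ j ∈ Icc 1 N, (f (2 * j) * f (2 * j - 1)) = ∏ t ∈ Icc 1 (2 * N), f t := by
  induction N with
  | zero => simp
  | succ n ih =>
    have h1 : Icc 1 (n + 1) = insert (n + 1) (Icc 1 n) := by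
      ext x; simp [mem_Icc, mem_insert]; omega
    have h2 : Icc 1 (2 * (n + 1)) = insert (2 * n + 2) (insert (2 * n + 1) (Icc 1 (2 * n))) := by
      ext x; simp [mem_Icc, mem_insert]; omega
    rw [h1, h2, prod_insert (by simp), prod_insert (by simp), prod_insert (by simp [mem_Icc]),
      ih]
    have e1 : 2 * (n + 1) = 2 * n + 2 := by ring
    have e2 : 2 * (n + 1) - 1 = 2 * n + 1 := by omega
    rw [e2, e1, mul_assoc]

open scoped Classical in
lemma coeff_prod_geom (s : Finset ℕ) (e : Fin 2 →₀ ℕ) :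
    MvPowerSeries.coeff e (∏ t ∈ s, geom (dW t)) =
      ((s.finsuppAntidiag e).filter (fun l => ∀ t ∈ s, ∃ k : ℕ, l t = k • dW t)).card := by
  rw [MvPowerSeries.coeff_prod]
  have step : ∀ l ∈ s.finsuppAntidiag e,
      (∏ t ∈ s, MvPowerSeries.coeff (l t) (geom (dW t)))
        = if (∀ t ∈ s, ∃ k : ℕ, l t = k • dW t) then (1 : ℚ) else 0 := by
    intro l _
    rw [Finset.prod_congr rfl (fun t _ => coeff_geom (dW t) (l t)), Finset.prod_boole]
  rw [Finset.sum_congr rfl step, Finset.sum_boole]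




namespace CPartition

lemma ext' {a b : CPartition} (h : a.parts = b.parts) : a = b := by
  cases a; cases b; simp_all

variable (lam : CPartition)

lemma parts_le (i : ℕ) : lam.parts i ≤ lam.parts 0 := lam.antitone (Nat.zero_le i)

lemma setFinite {j : ℕ} (hj : 1 ≤ j) : {i : ℕ | j ≤ lam.parts i}.Finite := by
  apply lam.finite_support.subset
  intro i hi
  simp only [Set.mem_setOf_eq] at hi ⊢
  omega

lemma lt_conj_iff {j : ℕ} (hj : 1 ≤ j) (i : ℕ) : i < lam.conj j ↔ j ≤ lam.parts i := by
  have hfin := lam.setFinite hj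
  have hcard : lam.conj j = hfin.toFinset.card := by
    rw [CPartition.conj, Nat.card_coe_set_eq, Set.ncard_eq_toFinset_card _ hfin]
  constructor
  · intro h
    by_contra hc
    push_neg at hc
    have hsub : hfin.toFinset ⊆ Finset.Iio i := by
      intro i' hi'
      rw [Set.Finite.mem_toFinset] at hi'
      simp only [Set.mem_setOf_eq] at hi'
      rw [Finset.mem_Iio]
      by_contra hge
      push_neg at hge
      have := lam.antitone hge
      omega
    have := Finset.card_le_card hsub
    rw [Nat.card_Iio] at this
    omega
  · intro h
    have hsub : Finset.Iic i ⊆ hfin.toFinset := by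
      intro i' hi'
      rw [Finset.mem_Iic] at hi'
      rw [Set.Finite.mem_toFinset]
      simp only [Set.mem_setOf_eq]
      exact le_trans h (lam.antitone hi')
    have := Finset.card_le_card hsub
    rw [Nat.card_Iic] at this
    omega

lemma conj_le_conj {a b : ℕ} (ha : 1 ≤ a) (hab : a ≤ b) : lam.conj b ≤ lam.conj a := by
  by_contra h
  push_neg at h
  have h1 : lam.conj a < lam.conj b := h
  have h2 : b ≤ lam.parts (lam.conj a) := (lam.lt_conj_iff (by omega) _).mp h1
  have h3 : lam.conj a < lam.conj a := (lam.lt_conj_iff ha _).mpr (le_trans hab h2)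
  omega

lemma conj_eq_zero {j : ℕ} (h : lam.parts 0 < j) : lam.conj j = 0 := by
  by_contra hc
  have h1 : 0 < lam.conj j := Nat.pos_of_ne_zero hc
  have := (lam.lt_conj_iff (by omega) 0).mp h1
  omega

lemma conj_pos {j : ℕ} (hj1 : 1 ≤ j) (hj : j ≤ lam.parts 0) : 1 ≤ lam.conj j :=
  (lam.lt_conj_iff hj1 0).mpr hj

lemma oddCols_eq_sum (T : ℕ) (hT : lam.parts 0 ≤ T) :
    lam.oddCols = ∑ j ∈ Icc 1 T, if Odd j then lam.conj j else 0 := by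
  apply tsum_eq_sum
  intro j hj
  simp only [mem_Icc, not_and, not_le] at hj
  by_cases h0 : j = 0
  · simp [h0]
  · have : T < j := hj (by omega)
    rw [lam.conj_eq_zero (by omega)]
    simp

lemma evenCols_eq_sum (T : ℕ) (hT : lam.parts 0 ≤ T) :
    lam.evenCols = ∑ j ∈ Icc 1 T, if Even j ∧ j ≠ 0 then lam.conj j else 0 := by
  apply tsum_eq_sum
  intro j hj
  simp only [mem_Icc, not_and, not_le] at hj
  by_cases h0 : j = 0
  · simp [h0]
  · have : T < j := hj (by omega)
    rw [lam.conj_eq_zero (by omega)]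
    simp

lemma cols_sum (T : ℕ) (hT : lam.parts 0 ≤ T) :
    lam.oddCols + lam.evenCols = ∑ j ∈ Icc 1 T, lam.conj j := by
  rw [lam.oddCols_eq_sum T hT, lam.evenCols_eq_sum T hT, ← Finset.sum_add_distrib]
  apply Finset.sum_congr rfl
  intro j hj
  simp only [mem_Icc] at hj
  rcases Nat.even_or_odd j with h | h
  · rw [if_neg (by simp [Nat.not_odd_iff_even.mpr h]), if_pos ⟨h, by omega⟩]
    simp
  · rw [if_pos h, if_neg (by rintro ⟨he, _⟩; exact (Nat.not_even_iff_odd.mpr h) he)]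
    simp

lemma parts_zero_le_sum : lam.parts 0 ≤ lam.oddCols + lam.evenCols := by
  rw [lam.cols_sum (lam.parts 0) le_rfl]
  calc lam.parts 0 = ∑ _j ∈ Icc 1 (lam.parts 0), 1 := by simp [Nat.card_Icc]
  _ ≤ ∑ j ∈ Icc 1 (lam.parts 0), lam.conj j := by
      apply Finset.sum_le_sum
      intro j hj
      simp only [mem_Icc] at hj
      exact lam.conj_pos hj.1 hj.2

end CPartition


def RR (M : ℕ) (c : ℕ →₀ ℕ) (t : ℕ) : ℕ := ∑ t' ∈ Icc t M, c t'

lemma RR_anti (M : ℕ) (c : ℕ →₀ ℕ) {a b : ℕ} (h : a ≤ b) : RR M c b ≤ RR M c a :=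
  Finset.sum_le_sum_of_subset (Finset.Icc_subset_Icc_left h)

lemma RR_zero_of_gt (M : ℕ) (c : ℕ →₀ ℕ) {t : ℕ} (h : M < t) : RR M c t = 0 := by
  rw [RR, Finset.Icc_eq_empty (by omega), Finset.sum_empty]

lemma RR_succ (M : ℕ) (c : ℕ →₀ ℕ) (t : ℕ) (h1 : t ≤ M) :
    RR M c t = c t + RR M c (t + 1) := by
  have : Icc t M = insert t (Icc (t + 1) M) := by
    ext x; simp only [mem_Icc, mem_insert]; omega
  rw [RR, this, Finset.sum_insert (by simp only [mem_Icc]; omega)]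
  rfl

noncomputable def buildP (M : ℕ) (c : ℕ →₀ ℕ) : CPartition where
  parts i := ((Icc 1 M).filter (fun t => i + 1 ≤ RR M c t)).card
  antitone := by
    intro i j hij
    apply Finset.card_le_card
    apply Finset.monotone_filter_right
    intro t ht
    omega
  finite_support := by
    apply Set.Finite.subset (Set.finite_Iio (RR M c 1))
    intro i hi
    simp only [Set.mem_setOf_eq] at hi
    simp only [Set.mem_Iio]
    by_contra h
    push_neg at h
    apply hi
    rw [Finset.card_eq_zero, Finset.filter_eq_empty_iff]
    intro t ht
    simp only [mem_Icc] at ht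
    have := RR_anti M c ht.1 (a := 1)
    omega

lemma buildP_char (M : ℕ) (c : ℕ →₀ ℕ) (i : ℕ) {j : ℕ} (hj : 1 ≤ j) :
    j ≤ (buildP M c).parts i ↔ i + 1 ≤ RR M c j := by
  constructor
  · intro h
    by_contra hc
    push_neg at hc
    have hsub : (Icc 1 M).filter (fun t => i + 1 ≤ RR M c t) ⊆ Finset.Ico 1 j := by
      intro t ht
      simp only [mem_filter, mem_Icc] at ht
      rw [Finset.mem_Ico]
      refine ⟨ht.1.1, ?_⟩
      by_contra hge
      push_neg at hge
      have := RR_anti M c hge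
      omega
    have hcard := Finset.card_le_card hsub
    rw [Nat.card_Ico] at hcard
    have : j ≤ ((Icc 1 M).filter (fun t => i + 1 ≤ RR M c t)).card := h
    omega
  · intro h
    have hjM : j ≤ M := by
      by_contra hc
      push_neg at hc
      rw [RR_zero_of_gt M c hc] at h
      omega
    have hsub : Icc 1 j ⊆ (Icc 1 M).filter (fun t => i + 1 ≤ RR M c t) := by
      intro t ht
      simp only [mem_Icc] at ht
      rw [mem_filter, mem_Icc]
      refine ⟨⟨ht.1, by omega⟩, le_trans h (RR_anti M c ht.2)⟩
    have hcard := Finset.card_le_card hsub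
    rw [Nat.card_Icc] at hcard
    calc j = j + 1 - 1 := by omega
    _ ≤ _ := hcard

lemma buildP_parts_le (M : ℕ) (c : ℕ →₀ ℕ) (i : ℕ) : (buildP M c).parts i ≤ M := by
  have h1 : (buildP M c).parts i ≤ (Icc 1 M).card :=
    Finset.card_filter_le (Icc 1 M) (fun t => i + 1 ≤ RR M c t)
  rw [Nat.card_Icc] at h1
  omega

lemma buildP_conj (M : ℕ) (c : ℕ →₀ ℕ) {j : ℕ} (hj : 1 ≤ j) :
    (buildP M c).conj j = RR M c j := by
  have h1 : {i : ℕ | j ≤ (buildP M c).parts i} = Set.Iio (RR M c j) := by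
    ext i
    simp only [Set.mem_setOf_eq, Set.mem_Iio, buildP_char M c i hj]
    omega
  rw [CPartition.conj, h1, ← Finset.coe_Iio, Nat.card_coe_set_eq, Set.ncard_coe_finset,
    Nat.card_Iio]

lemma card_filter_odd (t : ℕ) : ((Icc 1 t).filter (fun j => Odd j)).card = (t + 1) / 2 := by
  induction t with
  | zero => simp
  | succ n ih =>
    have h1 : Icc 1 (n + 1) = insert (n + 1) (Icc 1 n) := by
      ext x; simp only [mem_Icc, mem_insert]; omega
    rw [h1, Finset.filter_insert]
    by_cases h : Odd (n + 1)
    · rw [if_pos h, Finset.card_insert_of_notMem (by simp [mem_Icc]), ih]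
      have := Nat.odd_iff.mp h
      omega
    · rw [if_neg h, ih]
      have := Nat.even_iff.mp (Nat.not_odd_iff_even.mp h)
      omega

lemma card_filter_even (t : ℕ) : ((Icc 1 t).filter (fun j => Even j)).card = t / 2 := by
  induction t with
  | zero => simp
  | succ n ih =>
    have h1 : Icc 1 (n + 1) = insert (n + 1) (Icc 1 n) := by
      ext x; simp only [mem_Icc, mem_insert]; omega
    rw [h1, Finset.filter_insert]
    by_cases h : Even (n + 1)
    · rw [if_pos h, Finset.card_insert_of_notMem (by simp [mem_Icc]), ih]
      have := Nat.even_iff.mp h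
      omega
    · rw [if_neg h, ih]
      have := Nat.odd_iff.mp (Nat.not_even_iff_odd.mp h)
      omega

lemma dc (M : ℕ) (c : ℕ →₀ ℕ) (p : ℕ → Prop) [DecidablePred p] (w : ℕ → ℕ)
    (hw : ∀ t, 1 ≤ t → t ≤ M → ((Icc 1 t).filter p).card = w t) :
    ∑ j ∈ Icc 1 M, (if p j then RR M c j else 0) = ∑ t ∈ Icc 1 M, c t * w t := by
  have step1 : ∀ j ∈ Icc 1 M, (if p j then RR M c j else 0)
      = ∑ t ∈ Icc 1 M, if p j ∧ j ≤ t then c t else 0 := by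
    intro j hj
    simp only [mem_Icc] at hj
    by_cases hp : p j
    · simp only [if_pos hp, hp, true_and, RR]
      have hfe : (Icc 1 M).filter (fun t => j ≤ t) = Icc j M := by
        ext x; simp only [mem_filter, mem_Icc]; omega
      rw [← Finset.sum_filter, hfe]
      simp
    · simp [hp]
  rw [Finset.sum_congr rfl step1, Finset.sum_comm]
  apply Finset.sum_congr rfl
  intro t ht
  simp only [mem_Icc] at ht
  have hfe : (Icc 1 M).filter (fun j => p j ∧ j ≤ t) = (Icc 1 t).filter p := by
    ext x; simp only [mem_filter, mem_Icc]; constructor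
    · rintro ⟨⟨h1, _⟩, hp, hle⟩; exact ⟨⟨h1, hle⟩, hp⟩
    · rintro ⟨⟨h1, hle⟩, hp⟩; exact ⟨⟨h1, by omega⟩, hp, hle⟩
  rw [← Finset.sum_filter, hfe, Finset.sum_const, hw t ht.1 ht.2]
  simp [mul_comm]

lemma telescope (f : ℕ → ℕ) (hf : ∀ a b : ℕ, 1 ≤ a → a ≤ b → f b ≤ f a) (j : ℕ) (hj : 1 ≤ j)
    (M : ℕ) : ∑ t ∈ Icc j M, (f t - f (t + 1)) = f j - f (M + 1) := by
  induction M with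
  | zero =>
    rw [Finset.Icc_eq_empty (by omega), Finset.sum_empty]
    have := hf (0 + 1) j (by omega) hj
    omega
  | succ n ih =>
    by_cases hle : j ≤ n + 1
    · have hins : Icc j (n + 1) = insert (n + 1) (Icc j n) := by
        ext x; simp only [mem_Icc, mem_insert]; omega
      rw [hins, Finset.sum_insert (by simp only [mem_Icc]; omega), ih]
      have h1 : f (n + 1 + 1) ≤ f (n + 1) := hf (n + 1) (n + 1 + 1) (by omega) (by omega)
      have h2 : f (n + 1) ≤ f j := hf j (n + 1) hj hle
      omega
    · rw [Finset.Icc_eq_empty (by omega), Finset.sum_empty]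
      have := hf (n + 1 + 1) j (by omega) (by omega)
      omega
lemma e_apply0 (m n : ℕ) :
    ((Finsupp.single (0 : Fin 2) m + Finsupp.single 1 n : Fin 2 →₀ ℕ)) 0 = m := by
  rw [Finsupp.add_apply, Finsupp.single_eq_same, Finsupp.single_eq_of_ne (by decide), add_zero]

lemma e_apply1 (m n : ℕ) :
    ((Finsupp.single (0 : Fin 2) m + Finsupp.single 1 n : Fin 2 →₀ ℕ)) 1 = n := by
  rw [Finsupp.add_apply, Finsupp.single_eq_of_ne (by decide), Finsupp.single_eq_same, zero_add]

noncomputable def cOf (l : ℕ →₀ (Fin 2 →₀ ℕ)) : ℕ →₀ ℕ :=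
  Finsupp.onFinset l.support (fun t => l t 0 / ((t + 1) / 2))
    (fun t h => by
      rw [Finsupp.mem_support_iff]
      intro h0
      apply h
      show l t 0 / ((t + 1) / 2) = 0
      rw [h0]
      simp)

lemma cOf_apply (l : ℕ →₀ (Fin 2 →₀ ℕ)) (t : ℕ) : cOf l t = l t 0 / ((t + 1) / 2) :=
  Finsupp.onFinset_apply

lemma l_eq (N : ℕ) (l : ℕ →₀ (Fin 2 →₀ ℕ)) (hsupp : l.support ⊆ Icc 1 (2 * N))
    (hP : ∀ t ∈ Icc 1 (2 * N), ∃ k : ℕ, l t = k • dW t) (t : ℕ) :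
    l t = cOf l t • dW t := by
  by_cases ht : t ∈ Icc 1 (2 * N)
  · obtain ⟨k, hk⟩ := hP t ht
    simp only [mem_Icc] at ht
    have hck : cOf l t = k := by
      rw [cOf_apply, hk, Finsupp.smul_apply, dW_apply0, smul_eq_mul,
        Nat.mul_div_cancel _ (by omega)]
    rw [hck, hk]
  · have hl0 : l t = 0 := by
      by_contra h
      exact ht (hsupp (Finsupp.mem_support_iff.mpr h))
    have : cOf l t = 0 := by rw [cOf_apply, hl0]; simp
    rw [this, hl0, zero_smul]

lemma if_even_eq (lam : CPartition) (M : ℕ) :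
    (∑ j ∈ Icc 1 M, if Even j then lam.conj j else 0)
      = ∑ j ∈ Icc 1 M, if Even j ∧ j ≠ 0 then lam.conj j else 0 :=
  Finset.sum_congr rfl (fun j hj => by
    have h1 := (mem_Icc.mp hj).1
    by_cases h : Even j
    · rw [if_pos h, if_pos ⟨h, by omega⟩]
    · rw [if_neg h, if_neg (by tauto)])

lemma buildP_cols (N m n : ℕ) (l : ℕ →₀ (Fin 2 →₀ ℕ))
    (hsum : ∑ t ∈ Icc 1 (2 * N), l t = Finsupp.single (0 : Fin 2) m + Finsupp.single 1 n)
    (hsupp : l.support ⊆ Icc 1 (2 * N))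
    (hP : ∀ t ∈ Icc 1 (2 * N), ∃ k : ℕ, l t = k • dW t) :
    (buildP (2 * N) (cOf l)).oddCols = m ∧ (buildP (2 * N) (cOf l)).evenCols = n := by
  have hle : (buildP (2 * N) (cOf l)).parts 0 ≤ 2 * N := buildP_parts_le _ _ _
  have hl := l_eq N l hsupp hP
  have h0 : ∑ t ∈ Icc 1 (2 * N), (cOf l) t * ((t + 1) / 2) = m := by
    have h := congrArg (fun f : Fin 2 →₀ ℕ => f 0) hsum
    rw [Finsupp.finset_sum_apply, e_apply0] at h
    rw [← h]
    apply Finset.sum_congr rfl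
    intro t _
    rw [hl t, Finsupp.smul_apply, dW_apply0, smul_eq_mul]
  have h1 : ∑ t ∈ Icc 1 (2 * N), (cOf l) t * (t / 2) = n := by
    have h := congrArg (fun f : Fin 2 →₀ ℕ => f 1) hsum
    rw [Finsupp.finset_sum_apply, e_apply1] at h
    rw [← h]
    apply Finset.sum_congr rfl
    intro t _
    rw [hl t, Finsupp.smul_apply, dW_apply1, smul_eq_mul]
  constructor
  · calc (buildP (2 * N) (cOf l)).oddCols
        = ∑ j ∈ Icc 1 (2 * N), (if Odd j then (buildP (2 * N) (cOf l)).conj j else 0) :=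
          CPartition.oddCols_eq_sum _ _ hle
      _ = ∑ j ∈ Icc 1 (2 * N), (if Odd j then RR (2 * N) (cOf l) j else 0) :=
          Finset.sum_congr rfl (fun j hj => by rw [buildP_conj _ _ (mem_Icc.mp hj).1])
      _ = ∑ t ∈ Icc 1 (2 * N), (cOf l) t * ((t + 1) / 2) :=
          dc _ _ _ _ (fun t _ _ => card_filter_odd t)
      _ = m := h0
  · calc (buildP (2 * N) (cOf l)).evenCols
        = ∑ j ∈ Icc 1 (2 * N), (if Even j ∧ j ≠ 0 then (buildP (2 * N) (cOf l)).conj j else 0) :=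
          CPartition.evenCols_eq_sum _ _ hle
      _ = ∑ j ∈ Icc 1 (2 * N), (if Even j then (buildP (2 * N) (cOf l)).conj j else 0) :=
          (if_even_eq _ _).symm
      _ = ∑ j ∈ Icc 1 (2 * N), (if Even j then RR (2 * N) (cOf l) j else 0) :=
          Finset.sum_congr rfl (fun j hj => by rw [buildP_conj _ _ (mem_Icc.mp hj).1])
      _ = ∑ t ∈ Icc 1 (2 * N), (cOf l) t * (t / 2) :=
          dc _ _ _ _ (fun t _ _ => card_filter_even t)
      _ = n := h1

open scoped Classical in
lemma card_count (m n N : ℕ) (hN : m + n ≤ N) :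
    (((Icc 1 (2 * N)).finsuppAntidiag (Finsupp.single (0 : Fin 2) m + Finsupp.single 1 n)).filter
        (fun l => ∀ t ∈ Icc 1 (2 * N), ∃ k : ℕ, l t = k • dW t)).card
      = Nat.card {lam : CPartition // lam.oddCols = m ∧ lam.evenCols = n} := by
  rw [← Nat.card_eq_finsetCard]
  apply Nat.card_eq_of_bijective (fun lp =>
    (⟨buildP (2 * N) (cOf lp.1), by
        have hl := lp.2
        simp only [Finset.mem_filter, Finset.mem_finsuppAntidiag] at hl
        exact buildP_cols N m n lp.1 hl.1.1 hl.1.2 hl.2⟩ :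
      {lam : CPartition // lam.oddCols = m ∧ lam.evenCols = n}))
  constructor
  · rintro ⟨l1, hl1⟩ ⟨l2, hl2⟩ hF
    simp only [Subtype.mk.injEq] at hF ⊢
    simp only [Finset.mem_filter, Finset.mem_finsuppAntidiag] at hl1 hl2
    obtain ⟨⟨hs1, hsupp1⟩, hP1⟩ := hl1
    obtain ⟨⟨hs2, hsupp2⟩, hP2⟩ := hl2
    have hRR : ∀ j, 1 ≤ j → RR (2 * N) (cOf l1) j = RR (2 * N) (cOf l2) j := by
      intro j hj
      rw [← buildP_conj _ _ hj, ← buildP_conj _ _ hj, hF]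
    have hc : ∀ t, cOf l1 t = cOf l2 t := by
      intro t
      by_cases ht : t ∈ Icc 1 (2 * N)
      · simp only [mem_Icc] at ht
        have e1 := RR_succ (2 * N) (cOf l1) t ht.2
        have e2 := RR_succ (2 * N) (cOf l2) t ht.2
        have g1 := hRR t ht.1
        have g2 := hRR (t + 1) (by omega)
        omega
      · have z1 : l1 t = 0 := by
          by_contra hz; exact ht (hsupp1 (Finsupp.mem_support_iff.mpr hz))
        have z2 : l2 t = 0 := by
          by_contra hz; exact ht (hsupp2 (Finsupp.mem_support_iff.mpr hz))
        rw [cOf_apply, cOf_apply, z1, z2]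
    apply DFunLike.ext
    intro t
    rw [l_eq N l1 hsupp1 hP1 t, l_eq N l2 hsupp2 hP2 t, hc t]
  · rintro ⟨lam, hm, hn⟩
    have hp0 : lam.parts 0 ≤ 2 * N := by
      have h := lam.parts_zero_le_sum
      rw [hm, hn] at h
      omega
    set c : ℕ →₀ ℕ := Finsupp.onFinset (Icc 1 (2 * N))
      (fun t => if t ∈ Icc 1 (2 * N) then lam.conj t - lam.conj (t + 1) else 0)
      (fun t h => by
        by_contra hct
        apply h
        show (if t ∈ Icc 1 (2 * N) then lam.conj t - lam.conj (t + 1) else 0) = 0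
        rw [if_neg hct]) with hcdef
    have hcapp : ∀ t, c t = if t ∈ Icc 1 (2 * N) then lam.conj t - lam.conj (t + 1) else 0 :=
      fun t => Finsupp.onFinset_apply
    have hRc : ∀ j, 1 ≤ j → RR (2 * N) c j = lam.conj j := by
      intro j hj
      have ht : ∀ t ∈ Icc j (2 * N), c t = lam.conj t - lam.conj (t + 1) := by
        intro t htm
        simp only [mem_Icc] at htm
        rw [hcapp, if_pos (by simp only [mem_Icc]; omega)]
      rw [RR, Finset.sum_congr rfl ht,
        telescope lam.conj (fun a b u v => lam.conj_le_conj u v) j hj,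
        lam.conj_eq_zero (show lam.parts 0 < 2 * N + 1 by omega), Nat.sub_zero]
    set l : ℕ →₀ (Fin 2 →₀ ℕ) := Finsupp.onFinset (Icc 1 (2 * N)) (fun t => c t • dW t)
      (fun t h => by
        by_contra hct
        apply h
        show c t • dW t = 0
        rw [hcapp, if_neg hct, zero_smul]) with hldef
    have hlapp : ∀ t, l t = c t • dW t := fun t => Finsupp.onFinset_apply
    have hsupp : l.support ⊆ Icc 1 (2 * N) := Finsupp.support_onFinset_subset
    have hP : ∀ t ∈ Icc 1 (2 * N), ∃ k : ℕ, l t = k • dW t := fun t _ => ⟨c t, hlapp t⟩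
    have hsum : ∑ t ∈ Icc 1 (2 * N), l t
        = Finsupp.single (0 : Fin 2) m + Finsupp.single 1 n := by
      apply DFunLike.ext
      intro a
      rw [Finsupp.finset_sum_apply]
      have hRRconj : ∀ (p : ℕ → Prop) [DecidablePred p],
          (∑ j ∈ Icc 1 (2 * N), if p j then RR (2 * N) c j else 0)
            = ∑ j ∈ Icc 1 (2 * N), if p j then lam.conj j else 0 := by
        intro p _
        exact Finset.sum_congr rfl (fun j hj => by rw [hRc j (mem_Icc.mp hj).1])
      fin_cases a
      · show (∑ t ∈ Icc 1 (2 * N), l t 0)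
            = ((Finsupp.single (0 : Fin 2) m + Finsupp.single 1 n : Fin 2 →₀ ℕ)) 0
        have hterm : ∀ t ∈ Icc 1 (2 * N), l t 0 = c t * ((t + 1) / 2) := fun t _ => by
          rw [hlapp, Finsupp.smul_apply, dW_apply0, smul_eq_mul]
        rw [Finset.sum_congr rfl hterm, e_apply0,
          ← dc (2 * N) c (fun j => Odd j) _ (fun t _ _ => card_filter_odd t), hRRconj,
          ← lam.oddCols_eq_sum (2 * N) hp0, hm]
      · show (∑ t ∈ Icc 1 (2 * N), l t 1)
            = ((Finsupp.single (0 : Fin 2) m + Finsupp.single 1 n : Fin 2 →₀ ℕ)) 1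
        have hterm : ∀ t ∈ Icc 1 (2 * N), l t 1 = c t * (t / 2) := fun t _ => by
          rw [hlapp, Finsupp.smul_apply, dW_apply1, smul_eq_mul]
        rw [Finset.sum_congr rfl hterm, e_apply1,
          ← dc (2 * N) c (fun j => Even j) _ (fun t _ _ => card_filter_even t), hRRconj,
          if_even_eq, ← lam.evenCols_eq_sum (2 * N) hp0, hn]
    refine ⟨⟨l, ?_⟩, ?_⟩
    · simp only [Finset.mem_filter, Finset.mem_finsuppAntidiag]
      exact ⟨⟨hsum, hsupp⟩, hP⟩
    apply Subtype.ext
    simp only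
    have hcOf : cOf l = c := by
      apply DFunLike.ext
      intro t
      rw [cOf_apply, hlapp]
      by_cases htm : t ∈ Icc 1 (2 * N)
      · simp only [mem_Icc] at htm
        rw [Finsupp.smul_apply, dW_apply0, smul_eq_mul, Nat.mul_div_cancel _ (by omega)]
      · rw [hcapp, if_neg htm, zero_smul]
        simp
    rw [hcOf]
    apply CPartition.ext'
    funext i
    have hch : ∀ j, 1 ≤ j → (j ≤ (buildP (2 * N) c).parts i ↔ j ≤ lam.parts i) := by
      intro j hj
      rw [buildP_char _ _ i hj, hRc j hj, ← lam.lt_conj_iff hj i]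
      omega
    have hc1 := hch ((buildP (2 * N) c).parts i)
    have hc2 := hch (lam.parts i)
    by_cases hz1 : (buildP (2 * N) c).parts i = 0
    · by_cases hz2 : lam.parts i = 0
      · rw [hz1, hz2]
      · have := (hc2 (by omega)).mpr le_rfl
        omega
    · have hx := (hc1 (by omega)).mp le_rfl
      by_cases hz2 : lam.parts i = 0
      · omega
      · have hy := (hc2 (by omega)).mpr le_rfl
        omega


/-- The character of a single vertical two-colored partition:
`Σ_λ u^{o(λ)} v^{e(λ)} = ∏_{j≥1} (1-(uv)^j)⁻¹ (1-u(uv)^{j-1})⁻¹`,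
stated coefficientwise (any truncation `N ≥ m + n` of the infinite product
computes the coefficient of `u^m v^n`). -/
theorem vertical_partition_character (m n : ℕ) (N : ℕ) (hN : m + n ≤ N) :
    MvPowerSeries.coeff (Finsupp.single 0 m + Finsupp.single 1 n)
      (∏ j ∈ Finset.Icc 1 N,
        ((1 - (MvPowerSeries.X 0 * MvPowerSeries.X 1) ^ j)⁻¹ *
          (1 - MvPowerSeries.X 0 * (MvPowerSeries.X 0 * MvPowerSeries.X 1) ^ (j - 1))⁻¹ :
            MvPowerSeries (Fin 2) ℚ))
    = Nat.card {lam : CPartition // lam.oddCols = m ∧ lam.evenCols = n} := by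
  have hprod : (∏ j ∈ Finset.Icc 1 N,
      ((1 - (MvPowerSeries.X 0 * MvPowerSeries.X 1) ^ j)⁻¹ *
        (1 - MvPowerSeries.X 0 * (MvPowerSeries.X 0 * MvPowerSeries.X 1) ^ (j - 1))⁻¹ :
          MvPowerSeries (Fin 2) ℚ))
      = ∏ t ∈ Icc 1 (2 * N), geom (dW t) := by
    rw [← prod_pair (fun t => geom (dW t)) N]
    apply Finset.prod_congr rfl
    intro j hj
    simp only [mem_Icc] at hj
    rw [factor_even j, factor_odd j hj.1,
      inv_one_sub_monomial (dW (2 * j)) (dW_ne_zero (by omega)),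
      inv_one_sub_monomial (dW (2 * j - 1)) (dW_ne_zero (by omega))]
  rw [hprod, coeff_prod_geom]
  norm_cast
  rw [← card_count m n N hN]
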